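/- arXiv:1806.06930 — 2 statements merged into one kernel-verified Lean document; each statement's English description precedes it below -/
import Mathlib

section
/- Let Γ(ε) be a positive bounded linear operator on a Hilbert space X. Then for every ε > 0 the strict inequality ‖ε(εI + Γ(ε))⁻¹ π_M‖ < 1 holds in operator norm. -/
open scoped RealInnerProductSpace
open Filter

/-- The orthogonal projection of `X` onto the subspace `M`, as a continuous linear map. -/
noncomputable def finProj {X : Type*} [NormedAddCommGroup X] [InnerProductSpace ℝ X]
    (M : Submodule ℝ X) [CompleteSpace M] : X →L[ℝ] X :=
  M.subtypeL ∘L M.orthogonalProjection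

/-- Let `Γ(ε)` be a positive bounded linear operator on a Hilbert space `X`.
Then for every `ε > 0` the strict inequality `‖ε(εI + Γ(ε))⁻¹ π_M‖ < 1` holds. -/
theorem norm_eps_resolvent_proj_lt_one
    {X : Type*} [NormedAddCommGroup X] [InnerProductSpace ℝ X] [CompleteSpace X]
    (M : Submodule ℝ X) [FiniteDimensional ℝ M]
    (ε : ℝ) (hε : 0 < ε) (Γ : X →L[ℝ] X)
    (hΓsa : IsSelfAdjoint Γ)
    (hΓpos : ∀ x : X, x ≠ 0 → 0 < ⟪Γ x, x⟫)
    (R : X →L[ℝ] X)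
    (hR : R ∘L (ε • (1 : X →L[ℝ] X) + Γ) = 1 ∧ (ε • (1 : X →L[ℝ] X) + Γ) ∘L R = 1) :
    ‖ε • (R ∘L finProj M)‖ < 1 := by
  -- Key pointwise estimate: for every nonzero `m`, `ε ‖R m‖ < ‖m‖`.
  have key : ∀ m : X, m ≠ 0 → ε * ‖R m‖ < ‖m‖ := by
    intro m hm
    set y := R m with hy
    have h1 : ε • y + Γ y = m := by
      have := congrArg (fun T : X →L[ℝ] X => T m) hR.2
      simpa using this
    have hy0 : y ≠ 0 := by
      intro h
      apply hm
      rw [h] at h1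
      simpa using h1.symm
    have hpos : 0 < ⟪Γ y, y⟫ := hΓpos y hy0
    have hsq : (ε * ‖y‖) ^ 2 < ‖m‖ ^ 2 := by
      have hmm : ‖m‖ ^ 2 = ε ^ 2 * ‖y‖ ^ 2 + 2 * ε * ⟪Γ y, y⟫ + ‖Γ y‖ ^ 2 := by
        rw [← h1, norm_add_sq_real, norm_smul, real_inner_smul_left, real_inner_comm]
        rw [Real.norm_eq_abs, abs_of_pos hε]
        ring
      have h2 : (0:ℝ) ≤ ‖Γ y‖ ^ 2 := sq_nonneg _
      nlinarith
    exact lt_of_pow_lt_pow_left₀ 2 (norm_nonneg m) hsq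
  -- Now handle the finite-dimensional projection.
  rcases subsingleton_or_nontrivial M with hM | hM
  · have hzero : finProj M = 0 := by
      ext x
      have : M.orthogonalProjection x = 0 := Subsingleton.elim _ _
      simp [finProj, this]
    rw [hzero]
    simp
  · have hne : (Metric.sphere (0 : M) 1).Nonempty :=
      NormedSpace.sphere_nonempty.mpr zero_le_one
    have hf : Continuous fun p : M => ε * ‖R (p : X)‖ := by fun_prop
    obtain ⟨m₀, hm₀S, hmax⟩ :=
      (isCompact_sphere (0 : M) 1).exists_isMaxOn hne hf.continuousOn
    have hm₀ : ‖(m₀ : X)‖ = 1 := by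
      simpa using mem_sphere_zero_iff_norm.mp hm₀S
    have hm₀ne : (m₀ : X) ≠ 0 := by
      intro h; rw [h] at hm₀; simpa using hm₀
    set c := ε * ‖R (m₀ : X)‖ with hc
    have hc1 : c < 1 := by
      have := key (m₀ : X) hm₀ne
      rwa [hm₀] at this
    have hc0 : 0 ≤ c := by positivity
    refine lt_of_le_of_lt (ContinuousLinearMap.opNorm_le_bound _ hc0 ?_) hc1
    intro x
    set p : M := M.orthogonalProjection x with hp
    have hx : (ε • (R ∘L finProj M)) x = ε • R (p : X) := by
      simp [finProj, hp]
    rw [hx]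
    by_cases hp0 : p = 0
    · simp [hp0]
      positivity
    · have hpn : (0:ℝ) < ‖p‖ := norm_pos_iff.mpr hp0
      set u : M := ‖p‖⁻¹ • p with hu
      have huS : u ∈ Metric.sphere (0 : M) 1 := by
        rw [mem_sphere_zero_iff_norm, hu, norm_smul, norm_inv, norm_norm,
          inv_mul_cancel₀ hpn.ne']
      have hmaxu : ε * ‖R (u : X)‖ ≤ c := hmax huS
      have hpu : (p : X) = ‖p‖ • (u : X) := by
        rw [hu]
        push_cast
        rw [smul_smul, mul_inv_cancel₀ hpn.ne', one_smul]
      have hRp : ‖R (p : X)‖ = ‖p‖ * ‖R (u : X)‖ := by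
        rw [hpu, map_smul, norm_smul, Real.norm_eq_abs, abs_of_pos hpn]
      have hple : ‖p‖ ≤ ‖x‖ := by
        have := Submodule.orthogonalProjectionOnto_norm_le M
        calc ‖p‖ = ‖M.orthogonalProjection x‖ := by rw [hp]
          _ ≤ ‖(M.orthogonalProjection : X →L[ℝ] M)‖ * ‖x‖ :=
            (M.orthogonalProjection).le_opNorm x
          _ ≤ 1 * ‖x‖ := by gcongr
          _ = ‖x‖ := one_mul _
      calc ‖ε • R (p : X)‖ = ε * ‖R (p : X)‖ := by
            rw [norm_smul, Real.norm_eq_abs, abs_of_pos hε]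
        _ = ‖p‖ * (ε * ‖R (u : X)‖) := by rw [hRp]; ring
        _ ≤ ‖p‖ * c := by gcongr
        _ ≤ ‖x‖ * c := by gcongr
        _ = c * ‖x‖ := mul_comm _ _
end

section
/- Let Γ be a positive bounded linear operator on a Hilbert space X and M a finite-dimensional subspace of X. If ε(εI + Γ)⁻¹h → 0 as ε → 0⁺ for every h ∈ X, then also ε(ε(I − π_M) + Γ)⁻¹h → 0 as ε → 0⁺ for every h ∈ X. -/
open scoped RealInnerProductSpace
open Filter

/-- A positive operator has a positive lower bound on a finite-dimensional subspace. -/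
theorem exists_coercive_on {X : Type*} [NormedAddCommGroup X] [InnerProductSpace ℝ X] (M : Submodule ℝ X) [FiniteDimensional ℝ M]
    (Γ : X →L[ℝ] X) (hΓpos : ∀ x : X, x ≠ 0 → 0 < ⟪Γ x, x⟫) :
    ∃ c > (0:ℝ), ∀ x ∈ M, c * ‖x‖ ^ 2 ≤ ⟪Γ x, x⟫ := by
  rcases subsingleton_or_nontrivial M with hM | hM
  · refine ⟨1, one_pos, fun x hx => ?_⟩
    have hx0 : x = 0 := by
      have : (⟨x, hx⟩ : M) = 0 := Subsingleton.elim _ _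
      simpa using congrArg Subtype.val this
    simp [hx0]
  · have hcomp : IsCompact (Metric.sphere (0 : M) 1) := isCompact_sphere 0 1
    have hne : (Metric.sphere (0 : M) 1).Nonempty :=
      NormedSpace.sphere_nonempty.mpr zero_le_one
    have hcont : Continuous fun m : M => ⟪Γ (m : X), (m : X)⟫ := by
      exact Continuous.inner (Γ.continuous.comp continuous_subtype_val)
        continuous_subtype_val
    obtain ⟨m₀, hm₀s, hm₀min⟩ := hcomp.exists_isMinOn hne hcont.continuousOn
    have hm₀norm : ‖(m₀ : X)‖ = 1 := by
      exact mem_sphere_zero_iff_norm.mp hm₀s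
    have hm₀ne : (m₀ : X) ≠ 0 := by
      intro h0; rw [h0] at hm₀norm; simp at hm₀norm
    refine ⟨⟪Γ (m₀ : X), (m₀ : X)⟫, hΓpos _ hm₀ne, fun x hx => ?_⟩
    rcases eq_or_ne x 0 with rfl | hxne
    · simp
    · have hxn : ‖x‖ ≠ 0 := norm_ne_zero_iff.mpr hxne
      set u : M := ⟨‖x‖⁻¹ • x, M.smul_mem _ hx⟩ with hu
      have hus : u ∈ Metric.sphere (0 : M) 1 := by
        rw [mem_sphere_zero_iff_norm]
        show ‖(‖x‖⁻¹ • x : X)‖ = 1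
        rw [norm_smul, norm_inv, norm_norm, inv_mul_cancel₀ hxn]
      have h1 : ⟪Γ (m₀:X), (m₀:X)⟫ ≤ ⟪Γ ((u :M) : X), ((u:M):X)⟫ := hm₀min hus
      have h2 : ⟪Γ ((u : M) : X), ((u : M) : X)⟫ = ‖x‖⁻¹ * (‖x‖⁻¹ * ⟪Γ x, x⟫) := by
        show ⟪Γ (‖x‖⁻¹ • x), (‖x‖⁻¹ • x)⟫ = _
        rw [map_smul, inner_smul_left, inner_smul_right]
        simp
      rw [h2] at h1
      have hxpos : (0:ℝ) < ‖x‖ := lt_of_le_of_ne (norm_nonneg x) (Ne.symm hxn)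
      calc ⟪Γ (m₀:X), (m₀:X)⟫ * ‖x‖ ^ 2 ≤ (‖x‖⁻¹ * (‖x‖⁻¹ * ⟪Γ x, x⟫)) * ‖x‖ ^ 2 := by
            nlinarith [sq_nonneg ‖x‖]
        _ = ⟪Γ x, x⟫ := by field_simp


theorem gammaCS {X : Type*} [NormedAddCommGroup X] [InnerProductSpace ℝ X] [CompleteSpace X]
    (Γ : X →L[ℝ] X) (hΓsa : IsSelfAdjoint Γ)
    (hΓnn : ∀ x : X, 0 ≤ ⟪Γ x, x⟫) (m n : X) :
    ⟪Γ m, n⟫ ^ 2 ≤ ⟪Γ m, m⟫ * ⟪Γ n, n⟫ := by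
  have hsym : ∀ a b : X, ⟪Γ a, b⟫ = ⟪a, Γ b⟫ :=
    fun a b => (ContinuousLinearMap.isSelfAdjoint_iff_isSymmetric.mp hΓsa) a b
  have key : ∀ t : ℝ, 0 ≤ ⟪Γ n, n⟫ * (t * t) + (2 * ⟪Γ m, n⟫) * t + ⟪Γ m, m⟫ := by
    intro t
    have h := hΓnn (m + t • n)
    have hnm : ⟪Γ n, m⟫ = ⟪Γ m, n⟫ := by
      rw [hsym n m, real_inner_comm]
    simp only [map_add, map_smul, inner_add_left, inner_add_right, inner_smul_left,
      inner_smul_right, smul_eq_mul, starRingEnd_apply, star_trivial] at h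
    rw [hnm] at h
    ring_nf at h ⊢
    linarith [h]
  have hd := discrim_le_zero key
  rw [discrim] at hd
  nlinarith [hd]

theorem key_arith {c G ε a b q nm nn : ℝ} (hc : 0 < c) (hG : 0 < G)
    (hε : 0 < ε) (hε1 : ε ≤ 1)
    (ha0 : 0 ≤ a) (hb0 : 0 ≤ b) (hnm : 0 ≤ nm) (hnn : 0 ≤ nn)
    (haC : c * nm ≤ a) (hbG : b ≤ G * nn) (hcs : q ^ 2 ≤ a * b) :
    ε * (min (c / (2 * (1 + G))) 1 / 2) * (nm + nn) ≤ ε * nn + (a + 2 * q + b) := by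
  set t : ℝ := min (c / (2 * (1 + G))) 1 with ht
  have htpos : 0 < t := lt_min (by positivity) one_pos
  have ht1 : t ≤ c / (2 * (1 + G)) := min_le_left _ _
  have ht2 : t ≤ 1 := min_le_right _ _
  clear_value t
  have hQ : a / 2 - b ≤ a + 2 * q + b := by
    nlinarith [sq_nonneg (q + a / 4 + b), sq_nonneg (a / 4 - b)]
  have hQ0 : 0 ≤ a + 2 * q + b := by
    nlinarith [sq_nonneg (q + a / 4 + b), sq_nonneg (a / 4 - b), sq_nonneg (a - b)]
  set Q : ℝ := a + 2 * q + b with hQdef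
  clear_value Q
  have hP2 : ε * (c / 2) * nm ≤ (1 + G) * (ε * nn + Q) := by
    rcases le_or_gt 0 (c / 2 * nm - G * nn) with hcase | hcase
    · have h3 : c / 2 * nm - G * nn ≤ Q := by nlinarith
      have h4 : ε * (c / 2 * nm - G * nn) ≤ Q := by nlinarith
      nlinarith [mul_nonneg hε.le hnn]
    · nlinarith [mul_nonneg hε.le hnn]
  have key1 : ε * t * nm ≤ ε * nn + Q := by
    have h7 : ε * t * nm ≤ ε * (c / (2 * (1 + G))) * nm := by
      have h8 := mul_le_mul_of_nonneg_right ht1 (mul_nonneg hε.le hnm)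
      nlinarith [h8]
    have h5 : ε * (c / (2 * (1 + G))) * nm = (ε * (c / 2) * nm) / (1 + G) := by
      field_simp
    have h6 : (ε * (c / 2) * nm) / (1 + G) ≤ ε * nn + Q := by
      rw [div_le_iff₀ (by positivity)]
      nlinarith
    linarith
  have key2 : ε * t * nn ≤ ε * nn + Q := by
    have h9 := mul_le_mul_of_nonneg_right ht2 (mul_nonneg hε.le hnn)
    nlinarith [h9]
  have hfin : ε * (t / 2) * (nm + nn) = (ε * t * nm + ε * t * nn) / 2 := by ring
  rw [hfin]
  linarith

theorem coercive_bound {X : Type*} [NormedAddCommGroup X] [InnerProductSpace ℝ X]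
    [CompleteSpace X]
    (M : Submodule ℝ X) [FiniteDimensional ℝ M]
    (Γ : X →L[ℝ] X) (hΓsa : IsSelfAdjoint Γ)
    (hΓnn : ∀ x : X, 0 ≤ ⟪Γ x, x⟫)
    (c : ℝ) (hc : 0 < c) (hcM : ∀ x ∈ M, c * ‖x‖ ^ 2 ≤ ⟪Γ x, x⟫) :
    ∃ δ > (0:ℝ), ∀ ε : ℝ, 0 < ε → ε ≤ 1 → ∀ x : X,
      ε * δ * ‖x‖ ^ 2 ≤ ⟪(ε • ((1 : X →L[ℝ] X) - finProj M) + Γ) x, x⟫ := by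
  set G : ℝ := ‖Γ‖ + 1 with hG
  have hGpos : 0 < G := by positivity
  refine ⟨min (c / (2 * (1 + G))) 1 / 2, by positivity, fun ε hε hε1 x => ?_⟩
  set m : X := (finProj M) x with hm
  set n : X := x - m with hn
  have hmM : m ∈ M := by
    rw [hm]
    exact (M.orthogonalProjection x).2
  have hx : x = m + n := by rw [hn]; abel
  have hmn : ⟪n, m⟫ = 0 := by
    rw [hn, hm]
    exact M.starProjection_inner_eq_zero x _ hmM
  have hnm0 : ⟪m, n⟫ = 0 := by rw [real_inner_comm]; exact hmn
  have hpyth : ‖x‖ ^ 2 = ‖m‖ ^ 2 + ‖n‖ ^ 2 := by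
    rw [hx, norm_add_sq_real, hnm0]; ring
  have hsplit : ⟪(ε • ((1 : X →L[ℝ] X) - finProj M) + Γ) x, x⟫
      = ε * ‖n‖ ^ 2 + ⟪Γ x, x⟫ := by
    have h1 : (ε • ((1 : X →L[ℝ] X) - finProj M) + Γ) x = ε • n + Γ x := by
      simp only [ContinuousLinearMap.add_apply, ContinuousLinearMap.smul_apply,
        ContinuousLinearMap.sub_apply, ContinuousLinearMap.one_apply, hn, hm]
    rw [h1, inner_add_left, inner_smul_left]
    have h2 : ⟪n, x⟫ = ‖n‖ ^ 2 := by
      rw [hx, inner_add_right, hmn, zero_add, real_inner_self_eq_norm_sq]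
    rw [h2]; simp
  rw [hsplit, hpyth]
  have hexp : ⟪Γ x, x⟫ = ⟪Γ m, m⟫ + 2 * ⟪Γ m, n⟫ + ⟪Γ n, n⟫ := by
    have hsym : ⟪Γ n, m⟫ = ⟪n, Γ m⟫ :=
      (ContinuousLinearMap.isSelfAdjoint_iff_isSymmetric.mp hΓsa) n m
    rw [hx]
    simp only [map_add, inner_add_left, inner_add_right]
    rw [hsym, real_inner_comm n (Γ m)]; ring
  rw [hexp]
  have hbG : ⟪Γ n, n⟫ ≤ G * ‖n‖ ^ 2 := by
    have h1 : ⟪Γ n, n⟫ ≤ ‖Γ n‖ * ‖n‖ := real_inner_le_norm _ _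
    have h2 : ‖Γ n‖ ≤ ‖Γ‖ * ‖n‖ := Γ.le_opNorm n
    have h3 : ‖Γ n‖ * ‖n‖ ≤ (‖Γ‖ * ‖n‖) * ‖n‖ :=
      mul_le_mul_of_nonneg_right h2 (norm_nonneg n)
    rw [hG]
    nlinarith [norm_nonneg n, sq_nonneg ‖n‖]
  exact key_arith hc hGpos hε hε1 (hΓnn m) (hΓnn n) (sq_nonneg ‖m‖) (sq_nonneg ‖n‖)
    (hcM m hmM) hbG (gammaCS Γ hΓsa hΓnn m n)

theorem findim_conv {X : Type*} [NormedAddCommGroup X] [InnerProductSpace ℝ X]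
    [CompleteSpace X]
    (M : Submodule ℝ X) [FiniteDimensional ℝ M]
    (S : ℝ → (X →L[ℝ] X))
    (hconv : ∀ x : X, Tendsto (fun ε => S ε x) (nhdsWithin (0:ℝ) (Set.Ioi 0)) (nhds 0))
    (v : ℝ → M) (C : ℝ)
    (hv : ∀ᶠ ε in nhdsWithin (0:ℝ) (Set.Ioi 0), ‖v ε‖ ≤ C) :
    Tendsto (fun ε => S ε ((v ε : M) : X)) (nhdsWithin (0:ℝ) (Set.Ioi 0)) (nhds 0) := by
  set b := stdOrthonormalBasis ℝ M with hb
  rw [tendsto_zero_iff_norm_tendsto_zero]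
  have hexpand : ∀ ε, S ε ((v ε : M) : X) = ∑ i, (b.repr (v ε) i) • S ε ((b i : X)) := by
    intro ε
    conv_lhs => rw [← b.sum_repr (v ε)]
    rw [Submodule.coe_sum]
    rw [map_sum]
    congr 1
    ext i
    rw [SetLike.val_smul, map_smul]
  have hbound : ∀ᶠ ε in nhdsWithin (0:ℝ) (Set.Ioi 0),
      ‖S ε ((v ε : M) : X)‖ ≤ ∑ i, C * ‖S ε ((b i : X))‖ := by
    filter_upwards [hv] with ε hε
    rw [hexpand ε]
    refine le_trans (norm_sum_le _ _) (Finset.sum_le_sum fun i _ => ?_)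
    rw [norm_smul]
    refine mul_le_mul_of_nonneg_right ?_ (norm_nonneg _)
    have h1 : b.repr (v ε) i = ⟪b i, v ε⟫ := b.repr_apply_apply (v ε) i
    have h2 : ‖b i‖ = 1 := b.orthonormal.1 i
    calc ‖b.repr (v ε) i‖ = |⟪b i, v ε⟫| := by rw [h1]; rfl
      _ ≤ ‖b i‖ * ‖v ε‖ := abs_real_inner_le_norm _ _
      _ = ‖v ε‖ := by rw [h2, one_mul]
      _ ≤ C := hε
  have hrhs : Tendsto (fun ε => ∑ i, C * ‖S ε ((b i : X))‖)
      (nhdsWithin (0:ℝ) (Set.Ioi 0)) (nhds 0) := by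
    have : Tendsto (fun ε => ∑ i, C * ‖S ε ((b i : X))‖)
        (nhdsWithin (0:ℝ) (Set.Ioi 0)) (nhds (∑ _i : Fin (Module.finrank ℝ M), C * 0)) := by
      refine tendsto_finset_sum _ fun i _ => ?_
      have hn : Tendsto (fun ε => ‖S ε ((b i : X))‖) (nhdsWithin (0:ℝ) (Set.Ioi 0)) (nhds 0) := by
        simpa using (hconv ((b i : X))).norm
      exact tendsto_const_nhds.mul hn
    simpa using this
  exact squeeze_zero' (Eventually.of_forall fun ε => norm_nonneg _) hbound hrhs

/-- Let `Γ` be a positive bounded linear operator on a Hilbert space `X` and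
`M` a finite-dimensional subspace. If `ε(εI + Γ)⁻¹h → 0` as `ε → 0⁺` for every `h`, then also
`ε(ε(I − π_M) + Γ)⁻¹h → 0` as `ε → 0⁺` for every `h`. -/
theorem strong_convergence_transfer
    {X : Type*} [NormedAddCommGroup X] [InnerProductSpace ℝ X] [CompleteSpace X]
    (M : Submodule ℝ X) [FiniteDimensional ℝ M]
    (Γ : X →L[ℝ] X) (hΓsa : IsSelfAdjoint Γ)
    (hΓpos : ∀ x : X, x ≠ 0 → 0 < ⟪Γ x, x⟫)
    (R₁ : ℝ → (X →L[ℝ] X))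
    (hR₁ : ∀ ε > (0 : ℝ),
      R₁ ε ∘L (ε • (1 : X →L[ℝ] X) + Γ) = 1 ∧ (ε • (1 : X →L[ℝ] X) + Γ) ∘L R₁ ε = 1)
    (R₂ : ℝ → (X →L[ℝ] X))
    (hR₂ : ∀ ε > (0 : ℝ),
      R₂ ε ∘L (ε • ((1 : X →L[ℝ] X) - finProj M) + Γ) = 1 ∧
      (ε • ((1 : X →L[ℝ] X) - finProj M) + Γ) ∘L R₂ ε = 1)
    (hconv : ∀ h : X,
      Tendsto (fun ε : ℝ => ε • R₁ ε h) (nhdsWithin 0 (Set.Ioi 0)) (nhds 0)) :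
    ∀ h : X, Tendsto (fun ε : ℝ => ε • R₂ ε h) (nhdsWithin 0 (Set.Ioi 0)) (nhds 0) := by
  intro h
  have hΓnn : ∀ x : X, 0 ≤ ⟪Γ x, x⟫ := by
    intro x
    rcases eq_or_ne x 0 with rfl | hx
    · simp
    · exact (hΓpos x hx).le
  obtain ⟨c, hc, hcM⟩ := exists_coercive_on M Γ hΓpos
  obtain ⟨δ, hδ, hco⟩ := coercive_bound M Γ hΓsa hΓnn c hc hcM
  -- resolvent bound:  ε δ ‖R₂ ε z‖ ≤ ‖z‖  for ε ∈ (0,1]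
  have hbound : ∀ ε : ℝ, 0 < ε → ε ≤ 1 → ∀ z : X, ε * δ * ‖R₂ ε z‖ ≤ ‖z‖ := by
    intro ε hε hε1 z
    set y := R₂ ε z with hy
    have hAz : (ε • ((1 : X →L[ℝ] X) - finProj M) + Γ) y = z := by
      have := congrArg (fun T : X →L[ℝ] X => T z) (hR₂ ε hε).2
      simpa using this
    have h1 := hco ε hε hε1 y
    rw [hAz] at h1
    have h2 : ⟪z, y⟫ ≤ ‖z‖ * ‖y‖ := real_inner_le_norm _ _
    rcases eq_or_lt_of_le (norm_nonneg y) with h0 | h0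
    · rw [← h0, mul_zero]
      exact norm_nonneg z
    · nlinarith [h0, norm_nonneg z]
  -- the resolvent identity
  have hId : ∀ ε : ℝ, 0 < ε → ∀ z : X,
      ε • R₂ ε z = ε • R₁ ε z + (ε • R₁ ε) ((finProj M) (ε • R₂ ε z)) := by
    intro ε hε z
    set y := R₂ ε z with hy
    have hA2y : (ε • ((1 : X →L[ℝ] X) - finProj M) + Γ) y = z := by
      have := congrArg (fun T : X →L[ℝ] X => T z) (hR₂ ε hε).2
      simpa using this
    have hA1y : (ε • (1 : X →L[ℝ] X) + Γ) y = z + ε • (finProj M y) := by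
      have hdiff : (ε • (1 : X →L[ℝ] X) + Γ) y
          = (ε • ((1 : X →L[ℝ] X) - finProj M) + Γ) y + ε • (finProj M y) := by
        simp only [ContinuousLinearMap.add_apply, ContinuousLinearMap.smul_apply,
          ContinuousLinearMap.sub_apply, ContinuousLinearMap.one_apply, smul_sub]
        abel
      rw [hdiff, hA2y]
    have h4 : R₁ ε ((ε • (1 : X →L[ℝ] X) + Γ) y) = y := by
      have := congrArg (fun T : X →L[ℝ] X => T y) (hR₁ ε hε).1
      simpa using this
    rw [hA1y, map_add, map_smul] at h4
    have hy' : y = R₁ ε z + ε • R₁ ε (finProj M y) := h4.symm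
    have hπ : (finProj M) (ε • y) = ε • (finProj M y) := map_smul _ _ _
    calc ε • y = ε • (R₁ ε z + ε • R₁ ε (finProj M y)) := by rw [← hy']
      _ = ε • R₁ ε z + (ε • R₁ ε) ((finProj M) (ε • y)) := by
          rw [hπ, smul_add]
          congr 1
          simp only [ContinuousLinearMap.smul_apply, map_smul]
  -- define v
  set v : ℝ → M := fun ε => M.orthogonalProjection (ε • R₂ ε h) with hv
  have hvcoe : ∀ ε : ℝ, ((v ε : M) : X) = (finProj M) (ε • R₂ ε h) := fun ε => rfl
  have hvb : ∀ᶠ ε in nhdsWithin (0:ℝ) (Set.Ioi 0), ‖v ε‖ ≤ δ⁻¹ * ‖h‖ := by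
    filter_upwards [Ioc_mem_nhdsGT_of_mem (Set.mem_Ico.mpr ⟨le_refl (0:ℝ), zero_lt_one⟩)]
      with ε hε
    have hε0 : 0 < ε := hε.1
    have hε1 : ε ≤ 1 := hε.2
    have hb := hbound ε hε0 hε1 h
    have hnorm1 : ‖v ε‖ ≤ ‖ε • R₂ ε h‖ := by
      have h10 := (M.orthogonalProjection).le_of_opNorm_le (M.orthogonalProjection_norm_le)
        (ε • R₂ ε h)
      rw [one_mul] at h10
      exact h10
    have hnorm2 : ‖ε • R₂ ε h‖ = ε * ‖R₂ ε h‖ := by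
      rw [norm_smul, Real.norm_eq_abs, abs_of_pos hε0]
    have hnorm3 : ε * ‖R₂ ε h‖ ≤ δ⁻¹ * ‖h‖ := by
      rw [← mul_le_mul_iff_of_pos_left hδ]
      calc δ * (ε * ‖R₂ ε h‖) = ε * δ * ‖R₂ ε h‖ := by ring
        _ ≤ ‖h‖ := hb
        _ = δ * (δ⁻¹ * ‖h‖) := by field_simp
    calc ‖v ε‖ ≤ ‖ε • R₂ ε h‖ := hnorm1
      _ = ε * ‖R₂ ε h‖ := hnorm2
      _ ≤ δ⁻¹ * ‖h‖ := hnorm3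
  -- finite-dimensional convergence for the correction term
  have hS : Tendsto (fun ε => (ε • R₁ ε) ((v ε : X))) (nhdsWithin (0:ℝ) (Set.Ioi 0))
      (nhds 0) := by
    refine findim_conv M (fun ε => ε • R₁ ε) ?_ v (δ⁻¹ * ‖h‖) hvb
    intro x
    have := hconv x
    simpa using this
  have hsum : Tendsto (fun ε : ℝ => ε • R₁ ε h + (ε • R₁ ε) ((v ε : X)))
      (nhdsWithin (0:ℝ) (Set.Ioi 0)) (nhds 0) := by
    simpa using (hconv h).add hS
  refine hsum.congr' ?_
  filter_upwards [self_mem_nhdsWithin] with ε (hε : ε ∈ Set.Ioi (0:ℝ))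
  rw [hvcoe ε]
  exact (hId ε hε h).symm
end
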